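/- Let k be an algebraically closed field of characteristic ≠ 2. There do not exist polynomials s, t ∈ k[x,y] such that x - s² = (y² - x(x²-1))·t. -/

import Mathlib

open MvPolynomial

theorem x_not_square_mod_elliptic_poly
    (k : Type*) [Field k] [IsAlgClosed k] (h2 : (2 : k) ≠ 0) :
    ¬ ∃ s t : MvPolynomial (Fin 2) k,
      X 0 - s ^ 2 = ((X 1) ^ 2 - X 0 * ((X 0) ^ 2 - 1)) * t := by
  rintro ⟨s, t, h⟩
  classical
  -- map into (k[x])[y]
  have hφ := congrArg (MvPolynomial.aeval (R := k)
    ![Polynomial.C Polynomial.X, (Polynomial.X : Polynomial (Polynomial k))]) h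
  simp only [map_sub, map_pow, map_mul, map_one,
    MvPolynomial.aeval_X, Matrix.cons_val_zero, Matrix.cons_val_one,
    Matrix.head_cons] at hφ
  set A := Polynomial k
  set c : A := Polynomial.X * (Polynomial.X ^ 2 - 1) with hc
  set q : Polynomial A := Polynomial.X ^ 2 - Polynomial.C c with hq
  have hqmap : (Polynomial.X : Polynomial A) ^ 2
      - Polynomial.C Polynomial.X * ((Polynomial.C Polynomial.X) ^ 2 - 1) = q := by
    rw [hq, hc]
    simp only [Polynomial.C_mul, Polynomial.C_sub, Polynomial.C_pow, Polynomial.C_1]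
  have hdegq : q.degree = 2 := by
    rw [hq]
    compute_degree!
  have hmonic : q.Monic := by
    have h1 : (Polynomial.C c).degree < (Polynomial.X ^ 2 : Polynomial A).degree := by
      apply lt_of_le_of_lt (Polynomial.degree_C_le)
      rw [Polynomial.degree_X_pow]
      exact_mod_cast two_pos
    simpa [hq] using (Polynomial.monic_X_pow 2).sub_of_left h1
  rw [hqmap] at hφ
  set S := (MvPolynomial.aeval (R := k)
    ![Polynomial.C Polynomial.X, (Polynomial.X : Polynomial (Polynomial k))]) s with hS
  set r := S %ₘ q with hr
  have hdvd1 : q ∣ Polynomial.C Polynomial.X - S ^ 2 := ⟨_, hφ⟩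
  clear_value c q S r
  have hdvd2 : q ∣ S - r := by
    have hrec := Polynomial.modByMonic_add_div S q
    exact ⟨S /ₘ q, by rw [hr]; linear_combination -hrec⟩
  have hdvd : q ∣ Polynomial.C Polynomial.X - r ^ 2 := by
    have : q ∣ S ^ 2 - r ^ 2 := by
      have : S ^ 2 - r ^ 2 = (S - r) * (S + r) := by ring
      rw [this]; exact hdvd2.mul_right _
    have := dvd_add hdvd1 this
    simpa using this
  have hdegr : r.degree ≤ 1 := by
    have h' := Polynomial.degree_modByMonic_lt S hmonic
    rw [← hr, hdegq] at h'
    by_cases hr0 : r = 0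
    · simp [hr0]
    · rw [Polynomial.degree_eq_natDegree hr0] at h' ⊢
      exact_mod_cast Nat.lt_succ_iff.mp (by exact_mod_cast h')
  set a := r.coeff 0 with ha
  set b := r.coeff 1 with hb
  have hrab : r = Polynomial.C b * Polynomial.X + Polynomial.C a :=
    Polynomial.eq_X_add_C_of_degree_le_one hdegr
  have hw : q ∣ Polynomial.C (Polynomial.X - a ^ 2 - b ^ 2 * c)
      - Polynomial.C (2 * a * b) * Polynomial.X := by
    have key : Polynomial.C (Polynomial.X - a ^ 2 - b ^ 2 * c)
        - Polynomial.C (2 * a * b) * Polynomial.X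
        = (Polynomial.C Polynomial.X - r ^ 2) + Polynomial.C (b ^ 2) * q := by
      rw [hrab, hq]
      simp only [Polynomial.C_sub, Polynomial.C_mul, Polynomial.C_pow, map_ofNat]
      ring
    rw [key]
    exact dvd_add hdvd (Dvd.intro_left _ rfl)
  have hw0 : Polynomial.C (Polynomial.X - a ^ 2 - b ^ 2 * c)
      - Polynomial.C (2 * a * b) * Polynomial.X = 0 := by
    apply Polynomial.eq_zero_of_dvd_of_degree_lt hw
    rw [hdegq]
    apply lt_of_le_of_lt (Polynomial.degree_sub_le _ _)
    simp only [max_lt_iff]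
    constructor
    · exact lt_of_le_of_lt Polynomial.degree_C_le (by norm_num)
    · apply lt_of_le_of_lt (Polynomial.degree_mul_le _ _)
      apply lt_of_le_of_lt (add_le_add Polynomial.degree_C_le Polynomial.degree_X_le)
      norm_num
  have hw0' : Polynomial.C (Polynomial.X - a ^ 2 - b ^ 2 * c)
      = Polynomial.C (2 * a * b) * Polynomial.X := sub_eq_zero.mp hw0
  have hcoeff0 : Polynomial.X - a ^ 2 - b ^ 2 * c = 0 := by
    have := congrArg (fun p => Polynomial.coeff p 0) hw0'
    simpa only [Polynomial.coeff_C_zero, Polynomial.coeff_C_mul,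
      Polynomial.coeff_X_zero, mul_zero] using this
  have hcoeff1 : 2 * a * b = 0 := by
    have := congrArg (fun p => Polynomial.coeff p 1) hw0'
    simp only [Polynomial.coeff_C, Polynomial.coeff_C_mul,
      Polynomial.coeff_X_one, mul_one, one_ne_zero, if_false] at this
    exact this.symm
  have h2A : (2 : A) ≠ 0 := fun hcon =>
    h2 (by simpa using congrArg (Polynomial.eval 0) hcon)
  have hab : a = 0 ∨ b = 0 := by
    rcases mul_eq_zero.mp hcoeff1 with h' | h'
    · rcases mul_eq_zero.mp h' with h'' | h''
      · exact absurd h'' h2A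
      · exact Or.inl h''
    · exact Or.inr h'
  have hmain : a ^ 2 + b ^ 2 * c = Polynomial.X := by linear_combination -hcoeff0
  rcases hab with h' | h'
  · -- a = 0 : b^2 * c = X, degree 2n+3 = 1
    rw [h', zero_pow two_ne_zero, zero_add] at hmain
    have hb0 : b ≠ 0 := by
      intro hb0
      rw [hb0] at hmain
      simp at hmain
      exact Polynomial.X_ne_zero hmain.symm
    have hc0 : c ≠ 0 := by
      intro hc0
      rw [hc0, mul_zero] at hmain
      exact Polynomial.X_ne_zero hmain.symm
    have hdc : c.natDegree = 3 := by rw [hc]; compute_degree!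
    have := congrArg Polynomial.natDegree hmain
    rw [Polynomial.natDegree_mul (pow_ne_zero _ hb0) hc0, Polynomial.natDegree_pow,
      hdc, Polynomial.natDegree_X] at this
    omega
  · -- b = 0 : a^2 = X
    rw [h', zero_pow two_ne_zero, zero_mul, add_zero] at hmain
    have ha0 : a ≠ 0 := by
      intro ha0
      rw [ha0] at hmain
      simp at hmain
      exact Polynomial.X_ne_zero hmain.symm
    have := congrArg Polynomial.natDegree hmain
    rw [Polynomial.natDegree_pow, Polynomial.natDegree_X] at this
    omega
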